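/- For n ≥ 3, SL_n(ℤ) is a perfect group: it equals its own commutator subgroup. -/

import Mathlib

open Matrix Finset

open scoped commutatorElement

namespace SLPerfectAux

variable {n : ℕ}

abbrev G (n : ℕ) := Matrix.SpecialLinearGroup (Fin n) ℤ

/-- The elementary matrix (transvection) as an element of `SL_n(ℤ)`. -/
def Elt (i j : Fin n) (hij : i ≠ j) (c : ℤ) : G n :=
  ⟨Matrix.transvection i j c, Matrix.det_transvection_of_ne i j hij c⟩

lemma Elt_mul_apply (i j : Fin n) (hij : i ≠ j) (c : ℤ) (M : G n) (a b : Fin n) :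
    (Elt i j hij c * M) a b = if a = i then M a b + c * M j b else M a b := by
  show (Matrix.transvection i j c * (M : Matrix (Fin n) (Fin n) ℤ)) a b = _
  by_cases ha : a = i
  · rw [if_pos ha, ha]; exact Matrix.transvection_mul_apply_same i j b c _
  · rw [if_neg ha]; exact Matrix.transvection_mul_apply_of_ne i j a b ha c _

def gens (n : ℕ) : Set (G n) :=
  { A | ∃ (i j : Fin n) (hij : i ≠ j) (c : ℤ), A = Elt i j hij c }

def Hgen (n : ℕ) : Subgroup (G n) := Subgroup.closure (gens n)

lemma Elt_mem (i j : Fin n) (hij : i ≠ j) (c : ℤ) : Elt i j hij c ∈ Hgen n :=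
  Subgroup.subset_closure ⟨i, j, hij, c, rfl⟩

lemma mem_iff (i j : Fin n) (hij : i ≠ j) (c : ℤ) (M : G n) :
    Elt i j hij c * M ∈ Hgen n ↔ M ∈ Hgen n :=
  (Hgen n).mul_mem_cancel_left (Elt_mem i j hij c)

/-- The first `k` columns of `M` agree with the identity. -/
def Pcols (k : ℕ) (M : G n) : Prop :=
  ∀ c : Fin n, (c : ℕ) < k → ∀ i : Fin n, M i c = if i = c then 1 else 0

lemma Pcols_mul (p q : Fin n) (hpq : p ≠ q) {k : ℕ} (hq : k ≤ (q : ℕ)) (c : ℤ) {M : G n}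
    (hP : Pcols k M) : Pcols k (Elt p q hpq c * M) := by
  intro c' hc' i
  have hq0 : M q c' = 0 := by
    rw [hP c' hc' q, if_neg (by intro e; subst e; omega)]
  rw [Elt_mul_apply]
  by_cases h : i = p
  · rw [if_pos h, hq0, mul_zero, add_zero, hP c' hc' i]
  · rw [if_neg h, hP c' hc' i]

lemma diag_dvd_det (M : G n) (j : Fin n) (hP : Pcols j M)
    (h0 : ∀ i : Fin n, (j : ℕ) < (i : ℕ) → M i j = 0) :
    M j j ∣ Matrix.det (M : Matrix (Fin n) (Fin n) ℤ) := by
  rw [Matrix.det_apply]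
  refine Finset.dvd_sum fun σ _ => ?_
  rw [Units.smul_def, smul_eq_mul]
  by_cases hfix : ∀ c : Fin n, (c : ℕ) < (j : ℕ) → σ c = c
  · by_cases hj : σ j = j
    · refine Dvd.dvd.mul_left ?_ _
      have h2 : M (σ j) j ∣ ∏ i, M (σ i) i :=
        Finset.dvd_prod_of_mem (fun i => M (σ i) i) (Finset.mem_univ j)
      rwa [hj] at h2
    · have hgt : (j : ℕ) < (σ j : ℕ) := by
        rcases lt_trichotomy ((σ j : ℕ)) ((j : ℕ)) with h | h | h
        · exact absurd (σ.injective (hfix (σ j) h)) hj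
        · exact absurd (Fin.ext h) hj
        · exact h
      have hzero : (∏ i, M (σ i) i) = (0 : ℤ) :=
        Finset.prod_eq_zero (Finset.mem_univ j) (h0 _ hgt)
      rw [hzero, mul_zero]
      exact dvd_zero _
  · push_neg at hfix
    obtain ⟨c, hc, hne⟩ := hfix
    have hz : M (σ c) c = 0 := by rw [hP c hc]; simp [hne]
    have hzero : (∏ i, M (σ i) i) = (0 : ℤ) :=
      Finset.prod_eq_zero (Finset.mem_univ c) hz
    rw [hzero, mul_zero]
    exact dvd_zero _

lemma det_eq_diag_of_max (M : G n) (j : Fin n) (hP : Pcols j M)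
    (hmax : ∀ i : Fin n, ¬ ((j : ℕ) < (i : ℕ))) :
    Matrix.det (M : Matrix (Fin n) (Fin n) ℤ) = M j j := by
  have ht : (M : Matrix (Fin n) (Fin n) ℤ).BlockTriangular id := by
    intro a b hab
    have hab' : (b : ℕ) < (a : ℕ) := hab
    have hb : (b : ℕ) < (j : ℕ) := by
      have := hmax a; omega
    have : M a b = if a = b then 1 else 0 := hP b hb a
    have hne : a ≠ b := by intro e; subst e; omega
    show M a b = 0
    rw [this]; simp [hne]
  rw [Matrix.det_of_upperTriangular ht]
  refine Finset.prod_eq_single j (fun b _ hbj => ?_) (fun h => absurd (Finset.mem_univ j) h)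
  have hb : (b : ℕ) < (j : ℕ) := by
    have h1 := hmax b
    have h2 : (b : ℕ) ≠ (j : ℕ) := fun e => hbj (Fin.ext e)
    omega
  have := hP b hb b
  show M b b = 1
  rw [this]; simp

lemma int_step (a b : ℤ) (hb : b ≠ 0) :
    ∃ t : ℤ, 1 ≤ a + t * b ∧ a + t * b ≤ (b.natAbs : ℤ) := by
  set β : ℤ := (b.natAbs : ℤ) with hβ
  have hβpos : 0 < β := by omega
  have h1 : 0 ≤ (a - 1) % β := Int.emod_nonneg _ (by omega)
  have h2 : (a - 1) % β < β := Int.emod_lt_of_pos _ hβpos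
  have h3 : (a - 1) % β = (a - 1) - β * ((a - 1) / β) := Int.emod_def _ _
  have key : ∃ t : ℤ, a + t * b = 1 + (a - 1) % β := by
    rcases lt_or_gt_of_ne hb with hneg | hpos
    · refine ⟨(a - 1) / β, ?_⟩
      have hβb : β = -b := by omega
      rw [h3, hβb]; ring
    · refine ⟨-((a - 1) / β), ?_⟩
      have hβb : β = b := by omega
      rw [h3, hβb]; ring
  obtain ⟨t, ht⟩ := key
  exact ⟨t, by omega, by omega⟩

/-- When the whole column `j` outside the diagonal is zero and the diagonal is `1`,
we are done with this column. -/
lemma colDone (j : Fin n) (M : G n)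
    (cont : ∀ M' : G n, Pcols ((j : ℕ) + 1) M' → M' ∈ Hgen n)
    (hP : Pcols (j : ℕ) M) (hd : M j j = 1)
    (hz : ∀ i : Fin n, i ≠ j → M i j = 0) : M ∈ Hgen n := by
  refine cont M ?_
  intro c hc i
  rcases Nat.lt_succ_iff_lt_or_eq.mp hc with h | h
  · exact hP c h i
  · have : c = j := Fin.ext h
    subst this
    by_cases hij : i = c
    · subst hij; simpa using hd
    · rw [hz i hij]; simp [hij]

/-- Clearing the column `j` outside the diagonal, given the diagonal entry is already `1`. -/
lemma clear (k : ℕ) : ∀ (j : Fin n) (M : G n),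
    (∀ M' : G n, Pcols ((j : ℕ) + 1) M' → M' ∈ Hgen n) →
    Pcols (j : ℕ) M → M j j = 1 →
    (∑ i ∈ Finset.univ.filter (fun i : Fin n => i ≠ j), (M i j).natAbs) ≤ k →
    M ∈ Hgen n := by
  induction k with
  | zero =>
    intro j M cont hP hd hs
    refine colDone j M cont hP hd fun i hi => ?_
    have := Finset.sum_eq_zero_iff.mp (Nat.le_zero.mp hs) i
      (Finset.mem_filter.mpr ⟨Finset.mem_univ i, hi⟩)
    omega
  | succ k ih =>
    intro j M cont hP hd hs
    by_cases hz : ∀ i : Fin n, i ≠ j → M i j = 0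
    · exact colDone j M cont hP hd hz
    · push_neg at hz
      obtain ⟨i, hij, hne⟩ := hz
      set M' : G n := Elt i j hij (-(M i j)) * M with hM'
      have hP' : Pcols (j : ℕ) M' := Pcols_mul i j hij le_rfl _ hP
      have happ : ∀ a b : Fin n, M' a b = if a = i then M a b + (-(M i j)) * M j b else M a b :=
        fun a b => Elt_mul_apply i j hij _ M a b
      have hd' : M' j j = 1 := by rw [happ]; simp [Ne.symm hij, hd]
      have hii : M' i j = 0 := by rw [happ]; simp [hd]
      have hs' : (∑ x ∈ Finset.univ.filter (fun x : Fin n => x ≠ j), (M' x j).natAbs) ≤ k := by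
        have hlt : (∑ x ∈ Finset.univ.filter (fun x : Fin n => x ≠ j), (M' x j).natAbs)
            < ∑ x ∈ Finset.univ.filter (fun x : Fin n => x ≠ j), (M x j).natAbs := by
          refine Finset.sum_lt_sum (fun x _ => ?_) ⟨i,
            Finset.mem_filter.mpr ⟨Finset.mem_univ i, hij⟩, ?_⟩
          · rw [happ]
            split_ifs with h
            · subst h; simp [hd]
            · exact le_rfl
          · rw [hii]; omega
        omega
      exact (mem_iff i j hij _ M).mp (ih j M' cont hP' hd' hs')

/-- The base case of the Euclidean reduction: everything below the diagonal in
column `j` is zero. -/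
lemma euclidBase (j : Fin n) (M : G n)
    (cont : ∀ M' : G n, Pcols ((j : ℕ) + 1) M' → M' ∈ Hgen n)
    (hP : Pcols (j : ℕ) M)
    (hz : ∀ i : Fin n, (j : ℕ) < (i : ℕ) → M i j = 0) : M ∈ Hgen n := by
  have hdet : Matrix.det (M : Matrix (Fin n) (Fin n) ℤ) = 1 := M.2
  have hdvd : M j j ∣ 1 := by
    have := diag_dvd_det M j hP hz
    rwa [hdet] at this
  rcases Int.isUnit_iff.mp (isUnit_of_dvd_one hdvd) with h1 | hm1
  · exact clear _ j M cont hP h1 le_rfl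
  · by_cases hex : ∃ i0 : Fin n, (j : ℕ) < (i0 : ℕ)
    · obtain ⟨i0, hji0⟩ := hex
      have hij0 : i0 ≠ j := by intro e; subst e; omega
      have hji0' : j ≠ i0 := Ne.symm hij0
      set M1 : G n := Elt i0 j hij0 (-1) * M with hM1
      set M2 : G n := Elt j i0 hji0' 2 * M1 with hM2
      set M3 : G n := Elt i0 j hij0 (-1) * M2 with hM3
      have happ1 : ∀ a b, M1 a b = if a = i0 then M a b + (-1) * M j b else M a b :=
        fun a b => Elt_mul_apply i0 j hij0 _ M a b
      have happ2 : ∀ a b, M2 a b = if a = j then M1 a b + 2 * M1 i0 b else M1 a b :=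
        fun a b => Elt_mul_apply j i0 hji0' _ M1 a b
      have happ3 : ∀ a b, M3 a b = if a = i0 then M2 a b + (-1) * M2 j b else M2 a b :=
        fun a b => Elt_mul_apply i0 j hij0 _ M2 a b
      have h1a : M1 i0 j = 1 := by rw [happ1]; simp [hz i0 hji0, hm1]
      have h1b : M1 j j = -1 := by rw [happ1]; simp [hji0', hm1]
      have h2a : M2 j j = 1 := by rw [happ2]; rw [if_pos rfl, h1a, h1b]; ring
      have h3a : M3 j j = 1 := by rw [happ3]; simp [hji0', h2a]
      have hP3 : Pcols (j : ℕ) M3 :=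
        Pcols_mul i0 j hij0 le_rfl _
          (Pcols_mul j i0 hji0' (le_of_lt hji0) _
            (Pcols_mul i0 j hij0 le_rfl _ hP))
      have : M3 ∈ Hgen n := clear _ j M3 cont hP3 h3a le_rfl
      rw [hM3, hM2, hM1] at this
      rwa [mem_iff, mem_iff, mem_iff] at this
    · exfalso
      push_neg at hex
      have := det_eq_diag_of_max M j hP (fun i => by have := hex i; omega)
      rw [hdet, hm1] at this
      omega

/-- Euclidean reduction of column `j` below the diagonal. -/
lemma euclid (k : ℕ) : ∀ (j : Fin n) (M : G n),
    (∀ M' : G n, Pcols ((j : ℕ) + 1) M' → M' ∈ Hgen n) →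
    Pcols (j : ℕ) M →
    (∑ i ∈ Finset.univ.filter (fun i : Fin n => (j : ℕ) < (i : ℕ)), (M i j).natAbs) ≤ k →
    M ∈ Hgen n := by
  induction k with
  | zero =>
    intro j M cont hP hs
    refine euclidBase j M cont hP fun i hi => ?_
    have := Finset.sum_eq_zero_iff.mp (Nat.le_zero.mp hs) i
      (Finset.mem_filter.mpr ⟨Finset.mem_univ i, hi⟩)
    omega
  | succ k ih =>
    intro j M cont hP hs
    by_cases hz : ∀ i : Fin n, (j : ℕ) < (i : ℕ) → M i j = 0
    · exact euclidBase j M cont hP hz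
    · push_neg at hz
      obtain ⟨i0, hji0, hb⟩ := hz
      have hij0 : i0 ≠ j := by intro e; subst e; omega
      have hji0' : j ≠ i0 := Ne.symm hij0
      obtain ⟨t, ht1, ht2⟩ := int_step (M j j) (M i0 j) hb
      set M1 : G n := Elt j i0 hji0' t * M with hM1
      have happ1 : ∀ a b, M1 a b = if a = j then M a b + t * M i0 b else M a b :=
        fun a b => Elt_mul_apply j i0 hji0' _ M a b
      have h1diag : M1 j j = M j j + t * M i0 j := by rw [happ1]; simp
      have h1pos : 1 ≤ M1 j j := by omega
      have h1ne : M1 j j ≠ 0 := by omega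
      have h1other : ∀ i : Fin n, i ≠ j → M1 i j = M i j := by
        intro i hi; rw [happ1]; simp [hi]
      set q : ℤ := M1 i0 j / M1 j j with hq
      set M2 : G n := Elt i0 j hij0 (-q) * M1 with hM2
      have happ2 : ∀ a b, M2 a b = if a = i0 then M1 a b + (-q) * M1 j b else M1 a b :=
        fun a b => Elt_mul_apply i0 j hij0 _ M1 a b
      have h2i0 : M2 i0 j = M1 i0 j % M1 j j := by
        rw [happ2, if_pos rfl, Int.emod_def]; ring
      have h2other : ∀ i : Fin n, i ≠ i0 → M2 i j = M1 i j := by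
        intro i hi; rw [happ2]; simp [hi]
      have hmod1 : 0 ≤ M1 i0 j % M1 j j := Int.emod_nonneg _ h1ne
      have hmod2 : M1 i0 j % M1 j j < M1 j j := Int.emod_lt_of_pos _ (by omega)
      have h1i0 : M1 i0 j = M i0 j := h1other i0 hij0
      have hdec : (M2 i0 j).natAbs < (M i0 j).natAbs := by
        rw [h2i0, h1i0]
        have hle : M1 j j ≤ ((M i0 j).natAbs : ℤ) := by omega
        rw [h1i0] at hmod1 hmod2
        omega
      have hP2 : Pcols (j : ℕ) M2 :=
        Pcols_mul i0 j hij0 le_rfl _ (Pcols_mul j i0 hji0' (le_of_lt hji0) _ hP)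
      have hs2 : (∑ i ∈ Finset.univ.filter (fun i : Fin n => (j : ℕ) < (i : ℕ)),
          (M2 i j).natAbs) ≤ k := by
        have hlt : (∑ i ∈ Finset.univ.filter (fun i : Fin n => (j : ℕ) < (i : ℕ)),
            (M2 i j).natAbs)
            < ∑ i ∈ Finset.univ.filter (fun i : Fin n => (j : ℕ) < (i : ℕ)),
            (M i j).natAbs := by
          refine Finset.sum_lt_sum (fun x hx => ?_) ⟨i0,
            Finset.mem_filter.mpr ⟨Finset.mem_univ i0, hji0⟩, hdec⟩
          by_cases hxi : x = i0
          · subst hxi; exact le_of_lt hdec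
          · have hxj : x ≠ j := by
              have := (Finset.mem_filter.mp hx).2
              intro e; subst e; omega
            rw [h2other x hxi, h1other x hxj]
        omega
      have : M2 ∈ Hgen n := ih j M2 cont hP2 hs2
      rw [hM2, hM1] at this
      rwa [mem_iff, mem_iff] at this

lemma main (m : ℕ) : ∀ (jn : ℕ), n ≤ jn + m → ∀ M : G n, Pcols jn M → M ∈ Hgen n := by
  induction m with
  | zero =>
    intro jn hjn M hP
    have : M = 1 := by
      apply Matrix.SpecialLinearGroup.ext
      intro i c
      have hc : (c : ℕ) < jn := lt_of_lt_of_le c.isLt (by omega)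
      rw [hP c hc i]
      have : (1 : G n) i c = (1 : Matrix (Fin n) (Fin n) ℤ) i c := rfl
      rw [this, Matrix.one_apply]
    rw [this]; exact one_mem _
  | succ m ih =>
    intro jn hjn M hP
    by_cases hlt : jn < n
    · set j : Fin n := ⟨jn, hlt⟩ with hj
      refine euclid _ j M (fun M' hM' => ih (jn + 1) (by omega) M' hM') hP le_rfl
    · exact ih jn (by omega) M hP

lemma Hgen_top (M : G n) : M ∈ Hgen n :=
  main n 0 (by omega) M (fun c hc => absurd hc (by omega))

lemma Elt_eq_commutator (i j k : Fin n) (hij : i ≠ j) (hik : i ≠ k) (hkj : k ≠ j) (c : ℤ) :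
    Elt i j hij c = ⁅Elt i k hik c, Elt k j hkj 1⁆ := by
  have hAB : single i k c * single k j (1 : ℤ) = single i j c := by
    rw [Matrix.single_mul_single_same, mul_one]
  have hBA : single k j (1 : ℤ) * single i k c = 0 :=
    Matrix.single_mul_single_of_ne _ _ _ _ (Ne.symm hij) _
  have hCA : single i j c * single i k c = 0 :=
    Matrix.single_mul_single_of_ne _ _ _ _ (Ne.symm hij) _
  have hCB : single i j c * single k j (1 : ℤ) = 0 :=
    Matrix.single_mul_single_of_ne _ _ _ _ (Ne.symm hkj) _
  have key : Elt i k hik c * Elt k j hkj 1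
      = Elt i j hij c * (Elt k j hkj 1 * Elt i k hik c) := by
    apply Subtype.ext
    show Matrix.transvection i k c * Matrix.transvection k j 1
      = Matrix.transvection i j c * (Matrix.transvection k j 1 * Matrix.transvection i k c)
    simp only [Matrix.transvection, mul_add, add_mul, one_mul, mul_one, hAB, hBA, hCA, hCB,
      add_zero]
    abel
  have hcomm : ⁅Elt i k hik c, Elt k j hkj 1⁆
      = (Elt i k hik c * Elt k j hkj 1) * (Elt k j hkj 1 * Elt i k hik c)⁻¹ := by
    group
  rw [hcomm, key, mul_inv_cancel_right]

end SLPerfectAux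

/-- For `n ≥ 3`, the group `SL_n(ℤ)` is perfect: it equals its own commutator
subgroup. -/
theorem SL_perfect (n : ℕ) (hn : 3 ≤ n) :
    commutator (Matrix.SpecialLinearGroup (Fin n) ℤ) = ⊤ := by
  rw [eq_top_iff]
  intro M _
  have hM := SLPerfectAux.Hgen_top (n := n) M
  refine (Subgroup.closure_le _).mpr ?_ hM
  rintro A ⟨i, j, hij, c, rfl⟩
  have hcompl : (({i, j} : Finset (Fin n))ᶜ).Nonempty := by
    rw [← Finset.card_pos, Finset.card_compl]
    have h2 : ({i, j} : Finset (Fin n)).card ≤ 2 := by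
      apply le_trans (Finset.card_insert_le _ _); simp
    simp only [Fintype.card_fin]
    omega
  obtain ⟨k, hk⟩ := hcompl
  simp only [Finset.mem_compl, Finset.mem_insert, Finset.mem_singleton, not_or] at hk
  have hik : i ≠ k := Ne.symm hk.1
  have hkj : k ≠ j := hk.2
  rw [SLPerfectAux.Elt_eq_commutator i j k hij hik hkj c]
  show _ ∈ commutator _
  rw [commutator_def]
  exact Subgroup.commutator_mem_commutator (Subgroup.mem_top _) (Subgroup.mem_top _)
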